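/- Let G be a profinite group and g an element of G whose conjugacy class g^G has cardinality strictly less than 2^{\aleph_0}. Then the centralizer C_G(g) is an open subgroup of G. -/

import Mathlib

open Cardinal

/-- A nonempty perfect compact Hausdorff space has at least continuum many points. -/
lemma continuum_le_mk_of_perfectSpace {X : Type*} [TopologicalSpace X] [T2Space X]
    [CompactSpace X] [PerfectSpace X] [Nonempty X] : 𝔠 ≤ #X := by
  -- splitting function
  have key : ∀ S : {S : Set X // Perfect S ∧ S.Nonempty},
      ∃ p : Bool → {T : Set X // Perfect T ∧ T.Nonempty},
        (∀ b, (p b).1 ⊆ S.1) ∧ Disjoint (p false).1 (p true).1 := by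
    rintro ⟨S, hS, hSne⟩
    obtain ⟨C₀, C₁, ⟨h₀, h₀ne, h₀sub⟩, ⟨h₁, h₁ne, h₁sub⟩, hd⟩ := hS.splitting hSne
    refine ⟨fun b => Bool.rec ⟨C₀, h₀, h₀ne⟩ ⟨C₁, h₁, h₁ne⟩ b, ?_, ?_⟩
    · rintro (_ | _) <;> simpa
    · simpa using hd
  choose step hsub hdisj using key
  -- the Cantor scheme
  let top : {S : Set X // Perfect S ∧ S.Nonempty} :=
    ⟨Set.univ, PerfectSpace.univ_perfect X, Set.univ_nonempty⟩
  let K : (ℕ → Bool) → ℕ → {S : Set X // Perfect S ∧ S.Nonempty} :=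
    fun x n => Nat.rec top (fun n S => step S (x n)) n
  have hKsucc : ∀ x n, K x (n + 1) = step (K x n) (x n) := fun _ _ => rfl
  have hKmono : ∀ x n, (K x (n + 1)).1 ⊆ (K x n).1 := fun x n => hsub _ _
  -- pick a point in each branch
  have hbranch : ∀ x : ℕ → Bool, (⋂ n, (K x n).1).Nonempty := by
    intro x
    refine IsCompact.nonempty_iInter_of_sequence_nonempty_isCompact_isClosed _
      (hKmono x) (fun n => (K x n).2.2) ?_ (fun n => (K x n).2.1.closed)
    exact (K x 0).2.1.closed.isCompact
  choose p hp using hbranch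
  have hpmem : ∀ x n, p x ∈ (K x n).1 := fun x n => Set.mem_iInter.mp (hp x) n
  -- prefix agreement
  have hagree : ∀ x y : ℕ → Bool, ∀ n, (∀ i < n, x i = y i) → K x n = K y n := by
    intro x y n
    induction n with
    | zero => intro _; rfl
    | succ n ih =>
      intro hlt
      rw [hKsucc, hKsucc, ih (fun i hi => hlt i (hi.trans (Nat.lt_succ_self n))),
        hlt n (Nat.lt_succ_self n)]
  -- injectivity
  have hinj : Function.Injective p := by
    intro x y hxy
    by_contra hne
    have hex : ∃ n, x n ≠ y n := by
      by_contra hall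
      push_neg at hall
      exact hne (funext hall)
    classical
    set n := Nat.find hex with hn
    have hdiff : x n ≠ y n := Nat.find_spec hex
    have hpref : ∀ i < n, x i = y i := fun i hi => not_not.mp (Nat.find_min hex hi)
    have hKeq : K x n = K y n := hagree x y n hpref
    have hx : p x ∈ (step (K x n) (x n)).1 := by
      have := hpmem x (n + 1); rwa [hKsucc] at this
    have hy : p x ∈ (step (K x n) (y n)).1 := by
      have := hpmem y (n + 1); rw [hKsucc, ← hKeq, ← hxy] at this; exact this
    have hd := hdisj (K x n)
    cases hxn : x n <;> cases hyn : y n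
    · exact hdiff (hxn.trans hyn.symm)
    · rw [hxn] at hx; rw [hyn] at hy
      exact (Set.disjoint_left.mp hd hx) hy
    · rw [hxn] at hx; rw [hyn] at hy
      exact (Set.disjoint_left.mp hd hy) hx
    · exact hdiff (hxn.trans hyn.symm)
  -- conclude
  have h1 : #(ℕ → Bool) = 𝔠 := by
    rw [Cardinal.mk_arrow, Cardinal.mk_bool, Cardinal.mk_nat, Cardinal.lift_id,
      Cardinal.lift_id, Cardinal.two_power_aleph0]
  have h2 : Cardinal.lift.{_, 0} #(ℕ → Bool) ≤ Cardinal.lift.{0} #X :=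
    Cardinal.lift_mk_le_lift_mk_of_injective hinj
  rw [h1, Cardinal.lift_continuum] at h2
  exact Cardinal.continuum_le_lift.mp h2

/-- The coset space of a closed subgroup of a topological group is Hausdorff. -/
lemma t2Space_quotient_of_isClosed {G : Type*} [Group G] [TopologicalSpace G]
    [IsTopologicalGroup G] (H : Subgroup G) (hH : IsClosed (H : Set G)) :
    T2Space (G ⧸ H) := by
  rw [t2_iff_isClosed_diagonal]
  set q : G → G ⧸ H := QuotientGroup.mk with hq
  have hqo : IsOpenMap q := QuotientGroup.isOpenMap_coe
  have hqs : Function.Surjective q := QuotientGroup.mk_surjective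
  have hpre : Prod.map q q ⁻¹' Set.diagonal (G ⧸ H) = {p : G × G | p.1⁻¹ * p.2 ∈ H} := by
    ext p
    simp only [Set.mem_preimage, Set.mem_setOf_eq, Prod.map, Set.mem_diagonal_iff]
    exact QuotientGroup.eq
  have hclosed : IsClosed (Prod.map q q ⁻¹' Set.diagonal (G ⧸ H)) := by
    rw [hpre]
    exact hH.preimage ((continuous_fst.inv).mul continuous_snd)
  rw [← isOpen_compl_iff]
  have himg : (Set.diagonal (G ⧸ H))ᶜ = Prod.map q q '' (Prod.map q q ⁻¹' (Set.diagonal (G ⧸ H))ᶜ) :=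
    (Set.image_preimage_eq _ (hqs.prodMap hqs)).symm
  rw [himg]
  exact (hqo.prodMap hqo) _ (by rw [Set.preimage_compl]; exact hclosed.isOpen_compl)

/-- In a profinite group, an element whose conjugacy class has fewer than
`2^ℵ₀` elements has open centralizer. -/
theorem stmt2 {G : Type*} [Group G] [TopologicalSpace G] [IsTopologicalGroup G]
    [CompactSpace G] [T2Space G] [TotallyDisconnectedSpace G] (g : G)
    (h : #(Set.range fun x : G => x⁻¹ * g * x) < Cardinal.continuum) :
    IsOpen ((Subgroup.centralizer {g} : Subgroup G) : Set G) := by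
  classical
  set C : Subgroup G := Subgroup.centralizer {g} with hC
  -- the centralizer is closed
  have hclosed : IsClosed (C : Set G) := by
    have : (C : Set G) = {x : G | g * x = x * g} := by
      ext x
      simp [hC, Subgroup.mem_centralizer_iff]
    rw [this]
    exact isClosed_eq (continuous_const.mul continuous_id) (continuous_id.mul continuous_const)
  -- the quotient injects into the conjugacy class
  have hcard : #(G ⧸ C) < Cardinal.continuum := by
    refine lt_of_le_of_lt ?_ h
    refine Cardinal.mk_le_of_injective (f := fun q : G ⧸ C =>
      (⟨q.out * g * q.out⁻¹, q.out⁻¹, by group⟩ :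
        Set.range fun x : G => x⁻¹ * g * x)) ?_
    intro q₁ q₂ hq
    have hval : q₁.out * g * q₁.out⁻¹ = q₂.out * g * q₂.out⁻¹ := congrArg Subtype.val hq
    have hmem : q₁.out⁻¹ * q₂.out ∈ C := by
      show q₁.out⁻¹ * q₂.out ∈ Subgroup.centralizer {g}
      rw [Subgroup.mem_centralizer_iff]
      intro x hx
      rw [Set.mem_singleton_iff] at hx
      subst hx
      have := congrArg (fun z => q₁.out⁻¹ * z * q₂.out) hval
      simpa [mul_assoc] using this
    calc q₁ = QuotientGroup.mk q₁.out := (QuotientGroup.out_eq' q₁).symm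
      _ = QuotientGroup.mk q₂.out := QuotientGroup.eq.mpr hmem
      _ = q₂ := QuotientGroup.out_eq' q₂
  -- suppose the centralizer is not open
  by_contra hopen
  haveI : T2Space (G ⧸ C) := t2Space_quotient_of_isClosed C hclosed
  -- no point of the quotient is isolated
  have hiso : ∀ q : G ⧸ C, ¬ IsOpen ({q} : Set (G ⧸ C)) := by
    intro q hq
    obtain ⟨a, rfl⟩ := QuotientGroup.mk_surjective q
    have h1 : IsOpen ({QuotientGroup.mk (1 : G)} : Set (G ⧸ C)) := by
      have himg := (Homeomorph.smul (a⁻¹ : G) (α := G ⧸ C)).isOpenMap _ hq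
      have heq : (Homeomorph.smul (a⁻¹ : G) (α := G ⧸ C)) '' {QuotientGroup.mk a} =
          {QuotientGroup.mk (1 : G)} := by
        rw [Set.image_singleton]
        rw [show (Homeomorph.smul (a⁻¹ : G) (α := G ⧸ C)) (QuotientGroup.mk a)
            = QuotientGroup.mk (a⁻¹ * a) from rfl, inv_mul_cancel]
      rwa [heq] at himg
    have hpre : (QuotientGroup.mk : G → G ⧸ C) ⁻¹' {QuotientGroup.mk (1 : G)} = (C : Set G) := by
      ext x
      simp only [Set.mem_preimage, Set.mem_singleton_iff, SetLike.mem_coe]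
      rw [eq_comm, QuotientGroup.eq]
      simp
    exact hopen (hpre ▸ h1.preimage continuous_quot_mk)
  haveI : PerfectSpace (G ⧸ C) := by
    rw [perfectSpace_iff_forall_not_isolated]
    intro x
    rw [Filter.neBot_iff]
    intro hbot
    exact hiso x ((isOpen_singleton_iff_punctured_nhds x).mpr hbot)
  have := continuum_le_mk_of_perfectSpace (X := G ⧸ C)
  exact absurd hcard (not_lt.mpr this)
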